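/- Let (L,·) be a loop, A(L) a subgroup of its automorphism group, and H(L) the A(L)-holomorph of (L,·). If H(L) is an Osborn loop, then for every x ∈ L and all α ∈ A(L): the bijections y ↦ α(x)·(x\y) and y ↦ (α(x)·x^ρ)·y are λ-regular, and there exists a λ-regular bijection U with α(x)·y = U(x·y) for all y ∈ L. -/

import Mathlib

/-- A loop: a set with multiplication, left and right division, and a
two-sided identity element, such that all translations are bijections
(expressed via the division operations). -/
structure Loop (L : Type*) where
  mul : L → L → L
  ldiv : L → L → L
  rdiv : L → L → L
  e : L
  mul_ldiv : ∀ x y, mul x (ldiv x y) = y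
  ldiv_mul : ∀ x y, ldiv x (mul x y) = y
  rdiv_mul : ∀ x y, mul (rdiv y x) x = y
  mul_rdiv : ∀ x y, rdiv (mul y x) x = y
  e_mul : ∀ x, mul e x = x
  mul_e : ∀ x, mul x e = x

namespace Loop

variable {L : Type*} (Q : Loop L)

/-- The left inverse `x^λ`, the unique element with `x^λ · x = e`. -/
def linv (x : L) : L := Q.rdiv Q.e x

/-- The right inverse `x^ρ`, the unique element with `x · x^ρ = e`. -/
def rinv (x : L) : L := Q.ldiv x Q.e

/-- A loop is Osborn if `x·((y·z)·x) = (x·((y·x^λ)·x))·(z·x)` for all `x,y,z`. -/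
def IsOsborn : Prop :=
  ∀ x y z, Q.mul x (Q.mul (Q.mul y z) x) =
    Q.mul (Q.mul x (Q.mul (Q.mul y (Q.linv x)) x)) (Q.mul z x)

/-- The automorphism group of a loop, as a subgroup of the permutation group. -/
def autGroup : Subgroup (Equiv.Perm L) where
  carrier := {α | ∀ x y, α (Q.mul x y) = Q.mul (α x) (α y)}
  one_mem' := fun _ _ => rfl
  mul_mem' := by
    intro α β ha hb x y
    simp only [Equiv.Perm.mul_apply]
    rw [hb x y, ha]
  inv_mem' := by
    intro α ha x y
    apply α.injective
    rw [ha]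
    simp

theorem mem_autGroup_iff {α : Equiv.Perm L} :
    α ∈ Q.autGroup ↔ ∀ x y, α (Q.mul x y) = Q.mul (α x) (α y) := Iff.rfl

theorem aut_fix_e {α : Equiv.Perm L} (hα : α ∈ Q.autGroup) : α Q.e = Q.e := by
  have h1 : α (Q.mul Q.e Q.e) = Q.mul (α Q.e) (α Q.e) := hα Q.e Q.e
  rw [Q.mul_e] at h1
  have h2 : Q.mul (α Q.e) (α Q.e) = Q.mul (α Q.e) Q.e := by rw [Q.mul_e, ← h1]
  have h3 := congrArg (Q.ldiv (α Q.e)) h2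
  rwa [Q.ldiv_mul, Q.ldiv_mul] at h3

/-- The `A`-holomorph of a loop `(L,·)`: the loop on `A × L` with multiplication
`(α,x)∘(β,y) = (α∘β, β(x)·y)`, where `A` is a subgroup of the automorphism group. -/
def Holomorph (A : Subgroup (Equiv.Perm L)) (hA : A ≤ Q.autGroup) : Loop (A × L) where
  mul p q := (p.1 * q.1, Q.mul ((q.1 : Equiv.Perm L) p.2) q.2)
  ldiv p r := (p.1⁻¹ * r.1, Q.ldiv (((p.1⁻¹ * r.1 : A) : Equiv.Perm L) p.2) r.2)
  rdiv r q := (r.1 * q.1⁻¹, ((q.1⁻¹ : A) : Equiv.Perm L) (Q.rdiv r.2 q.2))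
  e := (1, Q.e)
  mul_ldiv p r := by
    refine Prod.ext ?_ ?_
    · simp
    · simp [Q.mul_ldiv]
  ldiv_mul p q := by
    refine Prod.ext ?_ ?_
    · simp
    · simp [inv_mul_cancel_left, Q.ldiv_mul]
  rdiv_mul r q := by
    refine Prod.ext ?_ ?_
    · simp
    · simp [Q.rdiv_mul]
  mul_rdiv p q := by
    refine Prod.ext ?_ ?_
    · simp
    · simp [Q.mul_rdiv]
  e_mul p := by
    refine Prod.ext ?_ ?_
    · simp
    · simp [Q.aut_fix_e (hA p.1.2), Q.e_mul]
  mul_e p := by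
    refine Prod.ext ?_ ?_
    · simp
    · simp [Q.mul_e]

/-- A triple `(A,B,C)` of bijections of `L` is an autotopism of `(L,·)` if
`A(x)·B(y) = C(x·y)` for all `x, y`. -/
def IsAutotopism (A B C : L → L) : Prop :=
  Function.Bijective A ∧ Function.Bijective B ∧ Function.Bijective C ∧
    ∀ x y, Q.mul (A x) (B y) = C (Q.mul x y)

/-- A bijection `U` is ρ-regular if `(I,U,U)` is an autotopism. -/
def IsRhoRegular (U : L → L) : Prop := Q.IsAutotopism id U U

/-- A bijection `U` is λ-regular if `(U,I,U)` is an autotopism. -/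
def IsLambdaRegular (U : L → L) : Prop := Q.IsAutotopism U id U

/-- `U'` is an adjoint of the bijection `U` if `(U, U'⁻¹, I)` is an autotopism. -/
def IsMuAdjoint (U U' : L → L) : Prop :=
  letI : Nonempty L := ⟨Q.e⟩
  Function.Bijective U' ∧ Q.IsAutotopism U (Function.invFun U') id

/-- `U` is μ-regular if it has an adjoint, i.e. `(U, U'⁻¹, I)` is an
autotopism for some bijection `U'`. The μ-regular bijections form `Φ(L,·)`. -/
def IsMuRegular (U : L → L) : Prop := ∃ U', Q.IsMuAdjoint U U'

/-- `U'` belongs to `Ψ(L,·)`, the group of adjoints of μ-regular bijections. -/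
def IsPsi (U' : L → L) : Prop := ∃ U, Q.IsMuAdjoint U U'

/-- Membership in the left nucleus `N_λ`. -/
def InNlambda (a : L) : Prop := ∀ y z, Q.mul a (Q.mul y z) = Q.mul (Q.mul a y) z

/-- Membership in the middle nucleus `N_μ`. -/
def InNmu (a : L) : Prop := ∀ y z, Q.mul (Q.mul y a) z = Q.mul y (Q.mul a z)

/-- Membership in the right nucleus `N_ρ`. -/
def InNrho (a : L) : Prop := ∀ y z, Q.mul (Q.mul y z) a = Q.mul y (Q.mul z a)

/-- Membership in the nucleus `N = N_λ ∩ N_μ ∩ N_ρ`. -/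
def InNucleus (a : L) : Prop := Q.InNlambda a ∧ Q.InNmu a ∧ Q.InNrho a

/-- Membership in the center `Z = N ∩ C`. -/
def InCenter (a : L) : Prop := Q.InNucleus a ∧ ∀ x, Q.mul a x = Q.mul x a

end Loop

/-- If `H(L)` is an Osborn loop, then for every `x ∈ L` and all
`α ∈ A(L)`: the bijections `y ↦ α(x)·(x\y)` and `y ↦ (α(x)·x^ρ)·y` are λ-regular,
and there exists a λ-regular bijection `U` with `α(x)·y = U(x·y)` for all `y`. -/
theorem holomorph_osborn_lambda_regular {L : Type*} (Q : Loop L)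
    (A : Subgroup (Equiv.Perm L)) (hA : A ≤ Q.autGroup) :
    (Q.Holomorph A hA).IsOsborn →
      ∀ (x : L) (α : A),
        Q.IsLambdaRegular (fun y => Q.mul ((α : Equiv.Perm L) x) (Q.ldiv x y)) ∧
        Q.IsLambdaRegular (fun y => Q.mul (Q.mul ((α : Equiv.Perm L) x) (Q.rinv x)) y) ∧
        ∃ U : L → L, Q.IsLambdaRegular U ∧ ∀ y, Q.mul ((α : Equiv.Perm L) x) y = U (Q.mul x y) := by
  intro hO x α
  unfold Loop.IsOsborn at hO
  -- basic cancellation lemmas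
  have lcancel : ∀ a b c : L, Q.mul a b = Q.mul a c → b = c := by
    intro a b c h
    have := congrArg (Q.ldiv a) h
    rwa [Q.ldiv_mul, Q.ldiv_mul] at this
  have rcancel : ∀ a b c : L, Q.mul b a = Q.mul c a → b = c := by
    intro a b c h
    have := congrArg (fun t => Q.rdiv t a) h
    simpa [Q.mul_rdiv] using this
  have ldiv_e : ∀ w : L, Q.ldiv Q.e w = w := by
    intro w
    have h := Q.mul_ldiv Q.e w
    rwa [Q.e_mul] at h
  -- computation rules for the holomorph
  have Hmul : ∀ p q : A × L, (Q.Holomorph A hA).mul p q =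
      (p.1 * q.1, Q.mul ((q.1 : Equiv.Perm L) p.2) q.2) := fun p q => rfl
  have Hlinv : ∀ p : A × L, (Q.Holomorph A hA).linv p =
      (p.1⁻¹, ((p.1⁻¹ : A) : Equiv.Perm L) (Q.linv p.2)) := by
    intro p
    refine Prod.ext ?_ ?_
    · simp [Loop.linv, Loop.Holomorph]
    · simp [Loop.linv, Loop.Holomorph]
  -- the Osborn identity for Q itself
  have hosb : ∀ u y z : L, Q.mul u (Q.mul (Q.mul y z) u) =
      Q.mul (Q.mul u (Q.mul (Q.mul y (Q.linv u)) u)) (Q.mul z u) := by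
    intro u y z
    have h := congrArg Prod.snd (hO (1, u) (1, y) (1, z))
    simpa [Hmul, Hlinv] using h
  have h1 : ∀ (γ : A) (u y z : L),
      Q.mul ((γ : Equiv.Perm L) u) (Q.mul (Q.mul ((γ : Equiv.Perm L) y) z) u) =
      Q.mul ((γ : Equiv.Perm L) (Q.mul u (Q.mul (Q.mul y (Q.linv u)) u))) (Q.mul z u) := by
    intro γ u y z
    have h := congrArg Prod.snd (hO (1, u) (1, y) (γ, z))
    simpa [Hmul, Hlinv] using h
  -- identity (H): (β(y)·uλ)·u = β((y·uλ)·u)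
  have hH : ∀ (β : A) (u y : L),
      Q.mul (Q.mul ((β : Equiv.Perm L) y) (Q.linv u)) u =
      (β : Equiv.Perm L) (Q.mul (Q.mul y (Q.linv u)) u) := by
    intro β u y
    have hβ : ∀ a b, (β : Equiv.Perm L) (Q.mul a b) =
        Q.mul ((β : Equiv.Perm L) a) ((β : Equiv.Perm L) b) := hA β.2
    have h := congrArg Prod.snd (hO (1, u) (β, (β : Equiv.Perm L) y) (β⁻¹, Q.e))
    simp [Hmul, Hlinv] at h
    -- h : u·((y·e)·u) = β⁻¹(β(u)·((β(y)·uλ)·u))·(e·u)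
    rw [Q.mul_e, Q.e_mul] at h
    have h0 := hosb u y Q.e
    rw [Q.mul_e, Q.e_mul] at h0
    rw [h0] at h
    have h2 := rcancel _ _ _ h.symm
    have h3 := congrArg (β : Equiv.Perm L) h2
    rw [Equiv.apply_symm_apply] at h3
    rw [hβ] at h3
    exact lcancel _ _ _ h3
  -- the key identity (K'): α(x)·s = (α(x)·(x\a))·(a\(x·s))
  have K' : ∀ s a : L,
      Q.mul ((α : Equiv.Perm L) x) s =
      Q.mul (Q.mul ((α : Equiv.Perm L) x) (Q.ldiv x a)) (Q.ldiv a (Q.mul x s)) := by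
    intro s a
    have hα : ∀ a b, (α : Equiv.Perm L) (Q.mul a b) =
        Q.mul ((α : Equiv.Perm L) a) ((α : Equiv.Perm L) b) := hA α.2
    set d : L := ((α⁻¹ : A) : Equiv.Perm L) (Q.ldiv x a) with hd_def
    set y : L := Q.rdiv (Q.rdiv d x) (Q.linv x) with hy_def
    have hd : Q.mul (Q.mul y (Q.linv x)) x = d := by
      rw [hy_def, Q.rdiv_mul, Q.rdiv_mul]
    set z : L := Q.ldiv ((α : Equiv.Perm L) y) (Q.rdiv s x) with hz_def
    have hs : Q.mul (Q.mul ((α : Equiv.Perm L) y) z) x = s := by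
      rw [hz_def, Q.mul_ldiv, Q.rdiv_mul]
    have hαd : (α : Equiv.Perm L) d = Q.ldiv x a := by
      rw [hd_def]
      simp
    -- from (**)
    have hB := hosb x ((α : Equiv.Perm L) y) z
    rw [hs, hH α x y, hd, hαd, Q.mul_ldiv] at hB
    -- hB : x·s = a·(z·x)
    have hzx : Q.mul z x = Q.ldiv a (Q.mul x s) := by
      rw [hB, Q.ldiv_mul]
    -- from (*)
    have hAq := h1 α x y z
    rw [hs, hd, hα, hαd] at hAq
    rw [hAq, hzx]
  -- the main map
  set U : L → L := fun w => Q.mul ((α : Equiv.Perm L) x) (Q.ldiv x w) with hU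
  have hUbij : Function.Bijective U := by
    apply Function.bijective_iff_has_inverse.mpr
    refine ⟨fun w => Q.mul x (Q.ldiv ((α : Equiv.Perm L) x) w), ?_, ?_⟩
    · intro w
      simp only [hU, Q.ldiv_mul, Q.mul_ldiv]
    · intro w
      simp only [hU, Q.ldiv_mul, Q.mul_ldiv]
  have hUreg : Q.IsLambdaRegular U := by
    refine ⟨hUbij, Function.bijective_id, hUbij, ?_⟩
    intro a b
    show Q.mul (U a) b = U (Q.mul a b)
    have h := K' (Q.ldiv x (Q.mul a b)) a
    rw [Q.mul_ldiv, Q.ldiv_mul] at h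
    exact h.symm
  have hU2 : (fun y => Q.mul (Q.mul ((α : Equiv.Perm L) x) (Q.rinv x)) y) = U := by
    funext w
    have h := K' (Q.ldiv x w) Q.e
    rw [Q.mul_ldiv, ldiv_e] at h
    show Q.mul (Q.mul ((α : Equiv.Perm L) x) (Q.rinv x)) w = U w
    rw [hU]
    simp only [Loop.rinv]
    exact h.symm
  refine ⟨hUreg, ?_, ⟨U, hUreg, ?_⟩⟩
  · rw [hU2]; exact hUreg
  · intro y
    show Q.mul ((α : Equiv.Perm L) x) y = Q.mul ((α : Equiv.Perm L) x) (Q.ldiv x (Q.mul x y))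
    rw [Q.ldiv_mul]
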